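/- Reduction rule for Pareto sets of a union: for subsets A, B ⊆ X̃, the strong Pareto set of A ∪ B equals the strong Pareto set of 𝒫_L(A) ∪ B, provided the dominance relation restricted to A is such that every non-Pareto point of A is dominated by some Pareto point of A (e.g., A is finite). That is, 𝒫_L(A ∪ B) = 𝒫_L(𝒫_L(A) ∪ B). -/
import Mathlib

theorem pareto_union_reduction
    {Y : Type*} {N : ℕ} (L : Y → Fin N → ℝ) (A B : Set Y) (hA : A.Finite) :
    {x ∈ A ∪ B | ¬ ∃ y ∈ A ∪ B, (∀ i, L y i ≤ L x i) ∧ ∃ j, L y j < L x j}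
      = {x ∈ ({x ∈ A | ¬ ∃ y ∈ A, (∀ i, L y i ≤ L x i) ∧ ∃ j, L y j < L x j} ∪ B) |
          ¬ ∃ y ∈ ({x ∈ A | ¬ ∃ y ∈ A, (∀ i, L y i ≤ L x i) ∧ ∃ j, L y j < L x j} ∪ B),
            (∀ i, L y i ≤ L x i) ∧ ∃ j, L y j < L x j} := by
  set dom : Y → Y → Prop := fun y x => (∀ i, L y i ≤ L x i) ∧ ∃ j, L y j < L x j with hdom
  have htrans : ∀ a b c, dom a b → dom b c → dom a c := by
    rintro a b c ⟨h1, j, hj⟩ ⟨h2, k, hk⟩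
    exact ⟨fun i => le_trans (h1 i) (h2 i), j, lt_of_lt_of_le hj (h2 j)⟩
  have hirrefl : ∀ a, ¬ dom a a := by
    rintro a ⟨_, j, hj⟩; exact lt_irrefl _ hj
  haveI : IsStrictOrder Y dom :=
    { irrefl := hirrefl
      trans := htrans }
  have hwf : A.WellFoundedOn dom := hA.wellFoundedOn
  set PA : Set Y := {x ∈ A | ¬ ∃ y ∈ A, dom y x} with hPA
  -- key: every point of A is (weakly) dominated by a Pareto point of A
  have key' : ∀ p : {a // a ∈ A}, ∃ y ∈ PA, y = p.1 ∨ dom y p.1 := by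
    intro p
    induction p using WellFounded.induction hwf with
    | _ z ih =>
      by_cases hp : ∃ y ∈ A, dom y z.1
      · obtain ⟨y, hyA, hyd⟩ := hp
        obtain ⟨w, hwPA, hw⟩ := ih ⟨y, hyA⟩ hyd
        refine ⟨w, hwPA, Or.inr ?_⟩
        rcases hw with rfl | hw
        · exact hyd
        · exact htrans _ _ _ hw hyd
      · exact ⟨z.1, ⟨z.2, hp⟩, Or.inl rfl⟩
  have key : ∀ x ∈ A, ∃ y ∈ PA, y = x ∨ dom y x := fun x hx => key' ⟨x, hx⟩
  ext x
  simp only [Set.mem_setOf_eq, Set.mem_union]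
  constructor
  · rintro ⟨hxmem, hnd⟩
    have hx' : (x ∈ PA ∨ x ∈ B) := by
      rcases hxmem with hA' | hB
      · left
        exact ⟨hA', fun ⟨y, hyA, hyd⟩ => hnd ⟨y, Or.inl hyA, hyd⟩⟩
      · right; exact hB
    refine ⟨hx', ?_⟩
    rintro ⟨y, hy, hyd⟩
    apply hnd
    refine ⟨y, ?_, hyd⟩
    rcases hy with hyPA | hyB
    · exact Or.inl hyPA.1
    · exact Or.inr hyB
  · rintro ⟨hxmem, hnd⟩
    have hxAB : x ∈ A ∨ x ∈ B := by
      rcases hxmem with hPA' | hB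
      · exact Or.inl hPA'.1
      · exact Or.inr hB
    refine ⟨hxAB, ?_⟩
    rintro ⟨y, hy, hyd⟩
    rcases hy with hyA | hyB
    · obtain ⟨w, hwPA, hw⟩ := key y hyA
      apply hnd
      refine ⟨w, Or.inl hwPA, ?_⟩
      rcases hw with rfl | hw
      · exact hyd
      · exact htrans _ _ _ hw hyd
    · exact hnd ⟨y, Or.inr hyB, hyd⟩
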